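/- Let n ≥ 1, k ≥ 1, p₀ ∈ ℝ^{n+1} and R₀ > 1. Then there exists σ₀ > 0 such that for every σ ≥ σ₀ and every ε ∈ (0,1], the radial function Φ(x) := σ(k+1)^{-1}(R₀^{k+1} − |x−p₀|^{k+1}) satisfies the supersolution inequality div(∇Φ/√(ε² + |∇Φ|²))(x) ≤ −(ε² + |∇Φ(x)|²)^{−1/(2k)} at every point x with 1 ≤ |x−p₀| ≤ R₀. -/

import Mathlib

open MeasureTheory Metric Set
set_option maxHeartbeats 2000000

/-- The divergence of a vector field `F` on `ℝ^{n+1}`: the trace of its Fréchet derivative. -/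
noncomputable def vdiv {n : ℕ}
    (F : EuclideanSpace ℝ (Fin (n + 1)) → EuclideanSpace ℝ (Fin (n + 1)))
    (x : EuclideanSpace ℝ (Fin (n + 1))) : ℝ :=
  LinearMap.trace ℝ (EuclideanSpace ℝ (Fin (n + 1)))
    (fderiv ℝ F x : EuclideanSpace ℝ (Fin (n + 1)) →ₗ[ℝ] EuclideanSpace ℝ (Fin (n + 1)))

/-- trace of a rank-one map. -/
lemma trace_smulRight_eq {V : Type*} [AddCommGroup V] [Module ℝ V]
    [Module.Finite ℝ V] [Module.Free ℝ V] (f : V →ₗ[ℝ] ℝ) (v : V) :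
    LinearMap.trace ℝ V (f.smulRight v) = f v := by
  have h1 : f.smulRight v = (LinearMap.toSpanSingleton ℝ V v) ∘ₗ f := by
    ext x; simp [LinearMap.toSpanSingleton_apply, smul_eq_mul]
  rw [h1, LinearMap.trace_comp_comm']
  have h2 : f ∘ₗ LinearMap.toSpanSingleton ℝ V v = (f v) • (LinearMap.id : ℝ →ₗ[ℝ] ℝ) := by
    ext r; simp [LinearMap.toSpanSingleton_apply, mul_comm]
  rw [h2, LinearMap.map_smul, LinearMap.trace_id, Module.finrank_self]
  simp

lemma trace_clm_smulRight {V : Type*} [NormedAddCommGroup V] [NormedSpace ℝ V]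
    [FiniteDimensional ℝ V] (A : V →L[ℝ] ℝ) (v : V) :
    LinearMap.trace ℝ V (((A.smulRight v : V →L[ℝ] V)) : V →ₗ[ℝ] V) = A v := by
  have h : (((A.smulRight v : V →L[ℝ] V)) : V →ₗ[ℝ] V)
      = (A : V →ₗ[ℝ] ℝ).smulRight v := rfl
  rw [h, trace_smulRight_eq]
  rfl

section Radial

variable {n : ℕ} (p₀ : EuclideanSpace ℝ (Fin (n + 1)))

lemma fderiv_comp_sq {φ : ℝ → ℝ} {φ' : ℝ} (x : EuclideanSpace ℝ (Fin (n + 1)))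
    (hφ : HasDerivAt φ φ' (‖x - p₀‖ ^ 2)) :
    HasFDerivAt (fun y => φ (‖y - p₀‖ ^ 2))
      (φ' • (2 • (innerSL ℝ (x - p₀)).comp (ContinuousLinearMap.id ℝ _))) x := by
  have hq : HasFDerivAt (fun y : EuclideanSpace ℝ (Fin (n + 1)) => ‖y - p₀‖ ^ 2)
      (2 • (innerSL ℝ (x - p₀)).comp (ContinuousLinearMap.id ℝ _)) x :=
    ((hasFDerivAt_id x).sub_const p₀).norm_sq
  simpa [Function.comp_def] using hφ.comp_hasFDerivAt x hq

lemma gradient_radial {φ : ℝ → ℝ} {φ' : ℝ} (x : EuclideanSpace ℝ (Fin (n + 1)))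
    (hφ : HasDerivAt φ φ' (‖x - p₀‖ ^ 2)) :
    HasGradientAt (fun y => φ (‖y - p₀‖ ^ 2)) ((2 * φ') • (x - p₀)) x := by
  rw [hasGradientAt_iff_hasFDerivAt]
  refine (fderiv_comp_sq p₀ x hφ).congr_fderiv ?_
  ext v
  simp [InnerProductSpace.toDual_apply_apply, innerSL_apply_apply, real_inner_smul_left]
  ring

lemma vdiv_radial (x : EuclideanSpace ℝ (Fin (n + 1))) (ρ : ℝ → ℝ) (ρ' : ℝ)
    (hρ : HasDerivAt ρ ρ' (‖x - p₀‖ ^ 2))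
    (F : EuclideanSpace ℝ (Fin (n + 1)) → EuclideanSpace ℝ (Fin (n + 1)))
    (hF : F =ᶠ[nhds x] fun y => ρ (‖y - p₀‖ ^ 2) • (y - p₀)) :
    vdiv F x = ((n : ℝ) + 1) * ρ (‖x - p₀‖ ^ 2) + ρ' * (2 * ‖x - p₀‖ ^ 2) := by
  have hc := fderiv_comp_sq p₀ x hρ
  have hH := hc.smul ((hasFDerivAt_id x).sub_const p₀)
  have hF' : HasFDerivAt F _ x := hH.congr_of_eventuallyEq hF
  unfold vdiv
  rw [hF'.fderiv, ContinuousLinearMap.coe_add, map_add, trace_clm_smulRight,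
    ContinuousLinearMap.coe_smul, ContinuousLinearMap.coe_id, _root_.map_smul,
    LinearMap.trace_id]
  simp only [id_eq, finrank_euclideanSpace_fin, Nat.cast_add, Nat.cast_one,
    ContinuousLinearMap.smul_apply, ContinuousLinearMap.coe_comp', Function.comp_apply,
    ContinuousLinearMap.coe_id', innerSL_apply_apply, smul_eq_mul, nsmul_eq_mul, Nat.cast_ofNat]
  rw [real_inner_self_eq_norm_sq]
  ring

lemma pow_helper (t k : ℝ) (ht : 0 < t) : (t ^ ((k - 1) / 2)) ^ 2 * t = t ^ k := by
  have h1 : (t ^ ((k - 1) / 2)) ^ 2 = t ^ (k - 1) := by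
    rw [← Real.rpow_natCast (t ^ ((k - 1) / 2)) 2, ← Real.rpow_mul ht.le]
    norm_num
  rw [h1]
  nth_rewrite 2 [← Real.rpow_one t]
  rw [← Real.rpow_add ht]
  ring_nf

lemma grad_Phi (k σ R₀ : ℝ) (hk : 1 ≤ k) (y : EuclideanSpace ℝ (Fin (n + 1)))
    (hy : 0 < ‖y - p₀‖) :
    HasGradientAt (fun x => σ / (k + 1) * (R₀ ^ (k + 1) - ‖x - p₀‖ ^ (k + 1)))
      ((-(σ * (‖y - p₀‖ ^ 2) ^ ((k - 1) / 2))) • (y - p₀)) y := by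
  have hrw : (fun x : EuclideanSpace ℝ (Fin (n + 1)) =>
      σ / (k + 1) * (R₀ ^ (k + 1) - ‖x - p₀‖ ^ (k + 1)))
      = fun x => σ / (k + 1) * (R₀ ^ (k + 1) - (‖x - p₀‖ ^ 2) ^ ((k + 1) / 2)) := by
    funext z
    have h : ((‖z - p₀‖ ^ 2 : ℝ)) ^ ((k + 1) / 2) = ‖z - p₀‖ ^ (k + 1) := by
      rw [← Real.rpow_natCast ‖z - p₀‖ 2, ← Real.rpow_mul (norm_nonneg _)]
      norm_num
      congr 1
      ring
    rw [h]
  rw [hrw]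
  have ht : (0 : ℝ) < ‖y - p₀‖ ^ 2 := by positivity
  have h1 : HasDerivAt (fun t : ℝ => σ / (k + 1) * (R₀ ^ (k + 1) - t ^ ((k + 1) / 2)))
      (σ / (k + 1) * (-((k + 1) / 2 * (‖y - p₀‖ ^ 2) ^ ((k + 1) / 2 - 1)))) (‖y - p₀‖ ^ 2) :=
    ((Real.hasDerivAt_rpow_const (Or.inl ht.ne')).const_sub (R₀ ^ (k + 1))).const_mul (σ / (k + 1))
  have h2 := gradient_radial p₀ y h1
  convert h2 using 2
  have he : (k + 1) / 2 - 1 = (k - 1) / 2 := by ring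
  rw [he]
  have hk1 : k + 1 ≠ 0 := by linarith
  field_simp

end Radial

lemma key_ineq (k σ ε s R₀ : ℝ) (hk : 1 ≤ k) (hR₀ : 1 ≤ R₀)
    (hσ : (2 * (R₀ ^ 2) ^ k) ^ k ≤ σ) (hε0 : 0 < ε) (hε1 : ε ≤ 1)
    (hs1 : 1 ≤ s) (hsR : s ≤ R₀ ^ 2) :
    (ε ^ 2 + σ ^ 2 * s ^ k) ^ ((k - 1) / (2 * k)) ≤ σ := by
  have hk0 : (0 : ℝ) < k := by linarith
  have hT1 : (1 : ℝ) ≤ (R₀ ^ 2) ^ k :=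
    Real.one_le_rpow (by nlinarith) hk0.le
  have h2T : (1 : ℝ) ≤ 2 * (R₀ ^ 2) ^ k := by linarith
  have hσ1 : (1 : ℝ) ≤ σ := le_trans (Real.one_le_rpow h2T hk0.le) hσ
  have hsk1 : (1 : ℝ) ≤ s ^ k := Real.one_le_rpow hs1 hk0.le
  have hskT : s ^ k ≤ (R₀ ^ 2) ^ k := Real.rpow_le_rpow (by linarith) hsR hk0.le
  have hw0 : (0 : ℝ) < ε ^ 2 + σ ^ 2 * s ^ k := by positivity
  have hw2 : ε ^ 2 + σ ^ 2 * s ^ k ≤ (2 * (R₀ ^ 2) ^ k) * σ ^ 2 := by nlinarith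
  -- main: (A) ^ ((k-1)/(2k)) ≤ σ  via  A^(k-1) ≤ σ^(2k)
  have hA1 : (ε ^ 2 + σ ^ 2 * s ^ k) ^ (k - 1) ≤ ((2 * (R₀ ^ 2) ^ k) * σ ^ 2) ^ (k - 1) :=
    Real.rpow_le_rpow hw0.le hw2 (by linarith)
  have hmul : ((2 * (R₀ ^ 2) ^ k) * σ ^ 2) ^ (k - 1)
      = (2 * (R₀ ^ 2) ^ k) ^ (k - 1) * (σ ^ 2) ^ (k - 1) :=
    Real.mul_rpow (by linarith) (by positivity)
  have h2Tσ : (2 * (R₀ ^ 2) ^ k) ^ (k - 1) ≤ σ ^ 2 := by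
    have : (2 * (R₀ ^ 2) ^ k) ^ (k - 1) ≤ (2 * (R₀ ^ 2) ^ k) ^ (2 * k) :=
      Real.rpow_le_rpow_of_exponent_le h2T (by linarith)
    have h2 : ((2 * (R₀ ^ 2) ^ k) ^ k) ^ 2 = (2 * (R₀ ^ 2) ^ k) ^ (2 * k) := by
      rw [← Real.rpow_natCast ((2 * (R₀ ^ 2) ^ k) ^ k) 2, ← Real.rpow_mul (by linarith)]
      norm_num; ring_nf
    have h3 : ((2 * (R₀ ^ 2) ^ k) ^ k) ^ 2 ≤ σ ^ 2 := by
      have h0 : (0:ℝ) ≤ (2 * (R₀ ^ 2) ^ k) ^ k := by positivity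
      nlinarith
    linarith [h2 ▸ h3]
  have hfin : (ε ^ 2 + σ ^ 2 * s ^ k) ^ (k - 1) ≤ σ ^ (2 * k) := by
    have hσ2k : σ ^ (2 * k) = σ ^ 2 * (σ ^ 2) ^ (k - 1) := by
      rw [← Real.rpow_natCast σ 2, ← Real.rpow_mul (by linarith : (0:ℝ) ≤ σ),
        ← Real.rpow_add (by linarith : (0:ℝ) < σ)]
      norm_num; ring_nf
    rw [hσ2k]
    calc (ε ^ 2 + σ ^ 2 * s ^ k) ^ (k - 1)
        ≤ (2 * (R₀ ^ 2) ^ k) ^ (k - 1) * (σ ^ 2) ^ (k - 1) := by rw [← hmul]; exact hA1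
      _ ≤ σ ^ 2 * (σ ^ 2) ^ (k - 1) :=
          mul_le_mul_of_nonneg_right h2Tσ (by positivity)
  -- conclude
  have hexp : (k - 1) / (2 * k) = (k - 1) * (1 / (2 * k)) := by ring
  have := Real.rpow_le_rpow (by positivity) hfin (by positivity : (0:ℝ) ≤ 1 / (2 * k))
  rw [← Real.rpow_mul hw0.le, ← Real.rpow_mul (by linarith : (0:ℝ) ≤ σ)] at this
  have h1 : 2 * k * (1 / (2 * k)) = 1 := by field_simp
  rw [h1, Real.rpow_one] at this
  rw [hexp]
  exact this

theorem radial_supersolution (n : ℕ) (hn : 1 ≤ n) (k : ℝ) (hk : 1 ≤ k)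
    (p₀ : EuclideanSpace ℝ (Fin (n + 1))) (R₀ : ℝ) (hR₀ : 1 < R₀) :
    ∃ σ₀ > (0 : ℝ), ∀ σ : ℝ, σ₀ ≤ σ → ∀ ε : ℝ, ε ∈ Ioc (0 : ℝ) 1 →
      let Φ : EuclideanSpace ℝ (Fin (n + 1)) → ℝ :=
        fun x => σ / (k + 1) * (R₀ ^ (k + 1) - ‖x - p₀‖ ^ (k + 1));
      ∀ x : EuclideanSpace ℝ (Fin (n + 1)), 1 ≤ ‖x - p₀‖ → ‖x - p₀‖ ≤ R₀ →
        vdiv (fun y => (Real.sqrt (ε ^ 2 + ‖gradient Φ y‖ ^ 2))⁻¹ • gradient Φ y) x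
          ≤ -((ε ^ 2 + ‖gradient Φ x‖ ^ 2) ^ (-(1 : ℝ) / (2 * k))) := by
  have hk0 : (0 : ℝ) < k := by linarith
  have hn1 : (1 : ℝ) ≤ (n : ℝ) := by exact_mod_cast hn
  refine ⟨(2 * (R₀ ^ 2) ^ k) ^ k, by positivity, ?_⟩
  intro σ hσ ε hε Φ x hx1 hxR
  obtain ⟨hε0, hε1⟩ := hε
  rw [show Φ = fun z => σ / (k + 1) * (R₀ ^ (k + 1) - ‖z - p₀‖ ^ (k + 1)) from rfl]
  have hσ1 : (1 : ℝ) ≤ σ := by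
    refine le_trans (Real.one_le_rpow ?_ hk0.le) hσ
    nlinarith [Real.one_le_rpow (show (1:ℝ) ≤ R₀ ^ 2 by nlinarith) hk0.le]
  have hx0 : (0 : ℝ) < ‖x - p₀‖ := lt_of_lt_of_le zero_lt_one hx1
  have hs0 : (0 : ℝ) < ‖x - p₀‖ ^ 2 := by positivity
  have hs1 : (1 : ℝ) ≤ ‖x - p₀‖ ^ 2 := by nlinarith
  have hsR : ‖x - p₀‖ ^ 2 ≤ R₀ ^ 2 := by nlinarith
  -- gradient norm formula
  have hgradnorm : ∀ y : EuclideanSpace ℝ (Fin (n + 1)), 0 < ‖y - p₀‖ →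
      ‖gradient (fun z => σ / (k + 1) * (R₀ ^ (k + 1) - ‖z - p₀‖ ^ (k + 1))) y‖ ^ 2
        = σ ^ 2 * (‖y - p₀‖ ^ 2) ^ k := by
    intro y hy
    have ht : (0 : ℝ) < ‖y - p₀‖ ^ 2 := by positivity
    rw [(grad_Phi p₀ k σ R₀ hk y hy).gradient, norm_smul, mul_pow, Real.norm_eq_abs, sq_abs,
      ← pow_helper (‖y - p₀‖ ^ 2) k ht]
    ring
  -- eventual equality with the radial model field
  have hF : (fun y : EuclideanSpace ℝ (Fin (n + 1)) =>
        (Real.sqrt (ε ^ 2 + ‖gradient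
            (fun z => σ / (k + 1) * (R₀ ^ (k + 1) - ‖z - p₀‖ ^ (k + 1))) y‖ ^ 2))⁻¹ •
          gradient (fun z => σ / (k + 1) * (R₀ ^ (k + 1) - ‖z - p₀‖ ^ (k + 1))) y)
      =ᶠ[nhds x] fun y =>
        ((Real.sqrt (ε ^ 2 + σ ^ 2 * (‖y - p₀‖ ^ 2) ^ k))⁻¹ *
          (-(σ * (‖y - p₀‖ ^ 2) ^ ((k - 1) / 2)))) • (y - p₀) := by
    have hcont : Continuous fun y : EuclideanSpace ℝ (Fin (n + 1)) => ‖y - p₀‖ :=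
      (continuous_id.sub continuous_const).norm
    filter_upwards [(isOpen_lt continuous_const hcont).mem_nhds
      (show (0:ℝ) < ‖x - p₀‖ from hx0)] with y hy
    have hy' : 0 < ‖y - p₀‖ := hy
    rw [hgradnorm y hy', (grad_Phi p₀ k σ R₀ hk y hy').gradient, smul_smul]
  -- derivative of the radial profile
  have hw0 : (0 : ℝ) < ε ^ 2 + σ ^ 2 * (‖x - p₀‖ ^ 2) ^ k := by positivity
  have hb0 : (0 : ℝ) < Real.sqrt (ε ^ 2 + σ ^ 2 * (‖x - p₀‖ ^ 2) ^ k) := Real.sqrt_pos.2 hw0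
  have hu : HasDerivAt (fun t : ℝ => ε ^ 2 + σ ^ 2 * t ^ k)
      (σ ^ 2 * (k * (‖x - p₀‖ ^ 2) ^ (k - 1))) (‖x - p₀‖ ^ 2) :=
    ((Real.hasDerivAt_rpow_const (Or.inl hs0.ne')).const_mul (σ ^ 2)).const_add (ε ^ 2)
  have hbinv := (hu.sqrt hw0.ne').inv hb0.ne'
  have hq2 : HasDerivAt (fun t : ℝ => -(σ * t ^ ((k - 1) / 2)))
      (-(σ * ((k - 1) / 2 * (‖x - p₀‖ ^ 2) ^ ((k - 1) / 2 - 1)))) (‖x - p₀‖ ^ 2) :=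
    ((Real.hasDerivAt_rpow_const (Or.inl hs0.ne')).const_mul σ).neg
  have hρs : HasDerivAt
      (fun t : ℝ => (Real.sqrt (ε ^ 2 + σ ^ 2 * t ^ k))⁻¹ * (-(σ * t ^ ((k - 1) / 2))))
      (-(σ ^ 2 * (k * (‖x - p₀‖ ^ 2) ^ (k - 1)) /
          (2 * Real.sqrt (ε ^ 2 + σ ^ 2 * (‖x - p₀‖ ^ 2) ^ k))) /
        Real.sqrt (ε ^ 2 + σ ^ 2 * (‖x - p₀‖ ^ 2) ^ k) ^ 2 *
        (-(σ * (‖x - p₀‖ ^ 2) ^ ((k - 1) / 2))) +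
        (Real.sqrt (ε ^ 2 + σ ^ 2 * (‖x - p₀‖ ^ 2) ^ k))⁻¹ *
        (-(σ * ((k - 1) / 2 * (‖x - p₀‖ ^ 2) ^ ((k - 1) / 2 - 1)))))
      (‖x - p₀‖ ^ 2) := hbinv.mul hq2
  rw [vdiv_radial p₀ x _ _ hρs _ hF, hgradnorm x hx0]
  -- now a purely real inequality
  set s : ℝ := ‖x - p₀‖ ^ 2 with hsdef
  set b : ℝ := Real.sqrt (ε ^ 2 + σ ^ 2 * s ^ k) with hbdef
  set p : ℝ := s ^ ((k - 1) / 2) with hpdef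
  set sk : ℝ := s ^ k with hskdef
  have hb2 : b ^ 2 = ε ^ 2 + σ ^ 2 * sk := Real.sq_sqrt hw0.le
  have hp1 : s ^ ((k - 1) / 2 - 1) * s = p := by
    rw [hpdef]
    nth_rewrite 2 [← Real.rpow_one s]
    rw [← Real.rpow_add hs0]
    ring_nf
  have hskm : s ^ (k - 1) * s = sk := by
    rw [hskdef]
    nth_rewrite 2 [← Real.rpow_one s]
    rw [← Real.rpow_add hs0]
    ring_nf
  have hp_one : (1 : ℝ) ≤ p := Real.one_le_rpow hs1 (by linarith)
  have hsk_one : (1 : ℝ) ≤ sk := Real.one_le_rpow hs1 (by linarith)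
  have hsk_pos : (0 : ℝ) < sk := by linarith
  set W : ℝ := (ε ^ 2 + σ ^ 2 * sk) ^ (-(1 : ℝ) / (2 * k)) with hWdef
  have hWpos : (0 : ℝ) < W := Real.rpow_pos_of_pos hw0 _
  have hkey : (ε ^ 2 + σ ^ 2 * sk) ^ ((k - 1) / (2 * k)) ≤ σ :=
    key_ineq k σ ε s R₀ hk hR₀.le hσ hε0 hε1 hs1 hsR
  have hbW : b * W ≤ σ := by
    have h : b * W = (ε ^ 2 + σ ^ 2 * sk) ^ ((k - 1) / (2 * k)) := by
      rw [hbdef, hWdef, Real.sqrt_eq_rpow, ← Real.rpow_add hw0]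
      congr 1
      field_simp
      ring
    rw [h]; exact hkey
  have hε2 : ε ^ 2 = b ^ 2 - σ ^ 2 * sk := by linarith
  set M : ℝ := ((n : ℝ) + k) * ε ^ 2 + (n : ℝ) * (σ ^ 2 * sk) with hMdef
  have hM0 : (0 : ℝ) ≤ M := by nlinarith [sq_nonneg ε, sq_nonneg σ]
  have hMw : ε ^ 2 + σ ^ 2 * sk ≤ M := by nlinarith [sq_nonneg ε, sq_nonneg σ]
  have hLHS : ((n : ℝ) + 1) * (b⁻¹ * (-(σ * p))) +
      (-(σ ^ 2 * (k * s ^ (k - 1)) / (2 * b)) / b ^ 2 * (-(σ * p)) +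
        b⁻¹ * (-(σ * ((k - 1) / 2 * s ^ ((k - 1) / 2 - 1))))) * (2 * s)
      = -(σ * p * M) / b ^ 3 := by
    have e1 : s ^ ((k - 1) / 2 - 1) = p / s := by
      rw [eq_div_iff hs0.ne']; exact hp1
    have e2 : s ^ (k - 1) = sk / s := by
      rw [eq_div_iff hs0.ne']; exact hskm
    rw [e1, e2, hMdef, hε2]
    field_simp
    ring
  rw [hLHS, div_le_iff₀ (by positivity : (0:ℝ) < b ^ 3)]
  have hchain : W * b ^ 3 ≤ σ * p * M := by
    calc W * b ^ 3 = (b * W) * b ^ 2 := by ring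
      _ ≤ σ * b ^ 2 := mul_le_mul_of_nonneg_right hbW (sq_nonneg b)
      _ = σ * (ε ^ 2 + σ ^ 2 * sk) := by rw [hb2]
      _ ≤ σ * (p * M) := by
          have h2 : ε ^ 2 + σ ^ 2 * sk ≤ p * M :=
            le_trans hMw (le_mul_of_one_le_left hM0 hp_one)
          exact mul_le_mul_of_nonneg_left h2 (by linarith)
      _ = σ * p * M := by ring
  linarith
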